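/- If x ∼ N(a, A) on ℝⁿ and, conditionally on x, y ∼ N(Hx + c, B) on ℝᵐ, then the pair (x,y) is jointly Gaussian with mean (a, Ha + c) and covariance [[A, AHᵀ],[HA, HAHᵀ + B]]. -/

import Mathlib

open Matrix MeasureTheory ProbabilityTheory Real

/-- `X` is a Gaussian random vector (under the measure `P`) with mean `m` and
covariance matrix `S`: every linear functional of `X` is a real Gaussian with
the corresponding mean and variance. -/
def IsGaussianVec {Ω ι : Type*} [MeasurableSpace Ω] [Fintype ι]
    (P : Measure Ω) (X : Ω → ι → ℝ) (m : ι → ℝ) (S : Matrix ι ι ℝ) : Prop :=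
  ∀ a : ι → ℝ,
    Measure.map (fun ω => a ⬝ᵥ X ω) P =
      gaussianReal (a ⬝ᵥ m) (Real.toNNReal (a ⬝ᵥ (S *ᵥ a)))

open scoped NNReal in
lemma gaussianPDFReal_conv_pt (m₁ m₂ : ℝ) {v₁ v₂ : ℝ≥0} (h1 : v₁ ≠ 0) (h2 : v₂ ≠ 0) (y x : ℝ) :
    gaussianPDFReal m₁ v₁ x * gaussianPDFReal (m₂ + x) v₂ y
      = ((√(2*π*v₁))⁻¹ * (√(2*π*v₂))⁻¹ * rexp (-(y - m₁ - m₂)^2/(2*((v₁:ℝ)+v₂))))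
        * rexp (-(((v₁:ℝ)+v₂)/(2*v₁*v₂))*(x-(m₁ + v₁*(y - m₁ - m₂)/((v₁:ℝ)+v₂)))^2) := by
  have hp : (0:ℝ) < v₁ := NNReal.coe_pos.mpr (pos_iff_ne_zero.mpr h1)
  have hq : (0:ℝ) < v₂ := NNReal.coe_pos.mpr (pos_iff_ne_zero.mpr h2)
  simp only [gaussianPDFReal]
  have hexp : rexp (-(x - m₁)^2/(2*v₁)) * rexp (-(y - (m₂ + x))^2/(2*v₂))
      = rexp (-(y - m₁ - m₂)^2/(2*((v₁:ℝ)+v₂)))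
        * rexp (-(((v₁:ℝ)+v₂)/(2*v₁*v₂))*(x-(m₁ + v₁*(y - m₁ - m₂)/((v₁:ℝ)+v₂)))^2) := by
    rw [← Real.exp_add, ← Real.exp_add]
    congr 1
    field_simp
    ring
  rw [mul_mul_mul_comm, hexp]
  ring

open scoped NNReal in
lemma gaussianPDFReal_conv (m₁ m₂ : ℝ) {v₁ v₂ : ℝ≥0} (h1 : v₁ ≠ 0) (h2 : v₂ ≠ 0) (y : ℝ) :
    ∫ x, gaussianPDFReal m₁ v₁ x * gaussianPDFReal (m₂ + x) v₂ y
      = gaussianPDFReal (m₁ + m₂) (v₁ + v₂) y := by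
  have hp : (0:ℝ) < v₁ := NNReal.coe_pos.mpr (pos_iff_ne_zero.mpr h1)
  have hq : (0:ℝ) < v₂ := NNReal.coe_pos.mpr (pos_iff_ne_zero.mpr h2)
  have hb : (0:ℝ) < ((v₁:ℝ)+v₂)/(2*v₁*v₂) := by positivity
  simp_rw [gaussianPDFReal_conv_pt m₁ m₂ h1 h2 y]
  rw [integral_const_mul]
  have h3 : ∫ x : ℝ, rexp (-(((v₁:ℝ)+v₂)/(2*v₁*v₂))*(x-(m₁ + v₁*(y - m₁ - m₂)/((v₁:ℝ)+v₂)))^2)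
      = √(π / (((v₁:ℝ)+v₂)/(2*v₁*v₂))) := by
    rw [show (fun x : ℝ => rexp (-(((v₁:ℝ)+v₂)/(2*v₁*v₂))*(x-(m₁ + v₁*(y - m₁ - m₂)/((v₁:ℝ)+v₂)))^2))
        = (fun x : ℝ => (fun u : ℝ => rexp (-(((v₁:ℝ)+v₂)/(2*v₁*v₂))*u^2)) (x - (m₁ + v₁*(y - m₁ - m₂)/((v₁:ℝ)+v₂)))) from rfl]
    rw [integral_sub_right_eq_self (μ := volume) (fun u : ℝ => rexp (-(((v₁:ℝ)+v₂)/(2*v₁*v₂))*u^2)) _]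
    exact integral_gaussian _
  rw [h3]
  rw [gaussianPDFReal]
  have hconst : (√(2*π*v₁))⁻¹ * (√(2*π*v₂))⁻¹ * √(π / (((v₁:ℝ)+v₂)/(2*v₁*v₂)))
      = (√(2 * π * ((v₁:ℝ)+v₂)))⁻¹ := by
    rw [← Real.sqrt_inv, ← Real.sqrt_inv, ← Real.sqrt_inv (2 * π * _),
      ← Real.sqrt_mul (by positivity), ← Real.sqrt_mul (by positivity)]
    congr 1
    have hπ := Real.pi_pos
    field_simp
  have hexpeq : (y - ((m₁:ℝ) + m₂))^2 = (y - m₁ - m₂)^2 := by ring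
  push_cast
  rw [hexpeq]
  linear_combination rexp (-(y - m₁ - m₂) ^ 2 / (2 * ((v₁:ℝ) + v₂))) * hconst

open scoped NNReal in
lemma gaussianPDFReal_conv_integrable (m₁ m₂ : ℝ) {v₁ v₂ : ℝ≥0} (h1 : v₁ ≠ 0) (h2 : v₂ ≠ 0)
    (y : ℝ) :
    Integrable (fun x => gaussianPDFReal m₁ v₁ x * gaussianPDFReal (m₂ + x) v₂ y) := by
  have hp : (0:ℝ) < v₁ := NNReal.coe_pos.mpr (pos_iff_ne_zero.mpr h1)
  have hq : (0:ℝ) < v₂ := NNReal.coe_pos.mpr (pos_iff_ne_zero.mpr h2)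
  have hb : (0:ℝ) < ((v₁:ℝ)+v₂)/(2*v₁*v₂) := by positivity
  simp_rw [gaussianPDFReal_conv_pt m₁ m₂ h1 h2 y]
  exact ((integrable_exp_neg_mul_sq hb).comp_sub_right _).const_mul _

open scoped NNReal in
lemma gaussianReal_conv (m₁ m₂ : ℝ) (v₁ v₂ : ℝ≥0) :
    Measure.map (fun p : ℝ × ℝ => p.1 + p.2) ((gaussianReal m₁ v₁).prod (gaussianReal m₂ v₂))
      = gaussianReal (m₁ + m₂) (v₁ + v₂) := by
  by_cases h1 : v₁ = 0
  · subst h1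
    rw [gaussianReal_zero_var, Measure.dirac_prod,
      Measure.map_map (by fun_prop) measurable_prodMk_left]
    rw [show ((fun p : ℝ × ℝ => p.1 + p.2) ∘ Prod.mk m₁) = (fun y : ℝ => m₁ + y) from rfl]
    rw [gaussianReal_map_const_add m₁, add_comm m₂ m₁, zero_add]
  by_cases h2 : v₂ = 0
  · subst h2
    rw [gaussianReal_zero_var, Measure.prod_dirac,
      Measure.map_map (by fun_prop) (measurable_prodMk_right)]
    rw [show ((fun p : ℝ × ℝ => p.1 + p.2) ∘ (fun x : ℝ => (x, m₂))) = (fun x : ℝ => x + m₂) from rfl]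
    rw [gaussianReal_map_add_const m₂, add_zero]
  have h12 : v₁ + v₂ ≠ 0 := by simp [h1]
  ext s hs
  rw [Measure.map_apply (by fun_prop) hs,
    Measure.prod_apply ((by fun_prop : Measurable fun p : ℝ × ℝ => p.1 + p.2) hs)]
  have key : ∀ x : ℝ, gaussianReal m₂ v₂ (Prod.mk x ⁻¹' ((fun p : ℝ × ℝ => p.1 + p.2) ⁻¹' s))
      = ∫⁻ y in s, gaussianPDF (m₂ + x) v₂ y := by
    intro x
    have hpre : (Prod.mk x ⁻¹' ((fun p : ℝ × ℝ => p.1 + p.2) ⁻¹' s))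
        = (fun y : ℝ => x + y) ⁻¹' s := rfl
    rw [hpre, ← Measure.map_apply (measurable_const_add x) hs, gaussianReal_map_const_add x,
      gaussianReal_apply _ h2 s]
  simp_rw [key]
  rw [gaussianReal_of_var_ne_zero _ h1]
  rw [lintegral_withDensity_eq_lintegral_mul _ (measurable_gaussianPDF _ _)
    (Measurable.lintegral_prod_right (by
      unfold gaussianPDF gaussianPDFReal
      fun_prop))]
  simp only [Pi.mul_apply]
  have step : ∀ x : ℝ, gaussianPDF m₁ v₁ x * (∫⁻ y in s, gaussianPDF (m₂ + x) v₂ y)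
      = ∫⁻ y in s, gaussianPDF m₁ v₁ x * gaussianPDF (m₂ + x) v₂ y :=
    fun x => (lintegral_const_mul _ (measurable_gaussianPDF _ _)).symm
  rw [lintegral_congr step]
  rw [lintegral_lintegral_swap (by
    apply Measurable.aemeasurable
    unfold gaussianPDF gaussianPDFReal
    fun_prop)]
  have final : ∀ y : ℝ, (∫⁻ x, gaussianPDF m₁ v₁ x * gaussianPDF (m₂ + x) v₂ y)
      = gaussianPDF (m₁ + m₂) (v₁ + v₂) y := by
    intro y
    have h4 : ∀ x : ℝ, gaussianPDF m₁ v₁ x * gaussianPDF (m₂ + x) v₂ y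
        = ENNReal.ofReal (gaussianPDFReal m₁ v₁ x * gaussianPDFReal (m₂ + x) v₂ y) :=
      fun x => (ENNReal.ofReal_mul (gaussianPDFReal_nonneg _ _ _)).symm
    rw [lintegral_congr h4,
      ← ofReal_integral_eq_lintegral_ofReal (gaussianPDFReal_conv_integrable m₁ m₂ h1 h2 y)
        (ae_of_all _ fun x =>
          mul_nonneg (gaussianPDFReal_nonneg _ _ _) (gaussianPDFReal_nonneg _ _ _)),
      gaussianPDFReal_conv m₁ m₂ h1 h2 y]
    rfl
  rw [lintegral_congr final, ← gaussianReal_apply _ h12 s]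

open scoped NNReal in
lemma indep_gauss_add {Ω : Type*} [MeasurableSpace Ω] {P : Measure Ω} [IsProbabilityMeasure P]
    {f g : Ω → ℝ} (hf : Measurable f) (hg : Measurable g) (h : IndepFun f g P)
    {μ₁ μ₂ : ℝ} {v₁ v₂ : ℝ≥0} (h1 : Measure.map f P = gaussianReal μ₁ v₁)
    (h2 : Measure.map g P = gaussianReal μ₂ v₂) :
    Measure.map (fun ω => f ω + g ω) P = gaussianReal (μ₁ + μ₂) (v₁ + v₂) := by
  have hpair := (indepFun_iff_map_prod_eq_prod_map_map hf.aemeasurable hg.aemeasurable).mp h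
  have heq : (fun ω => f ω + g ω) = (fun p : ℝ × ℝ => p.1 + p.2) ∘ (fun ω => (f ω, g ω)) := rfl
  rw [heq, ← Measure.map_map (by fun_prop) (hf.prodMk hg), hpair, h1, h2, gaussianReal_conv]

lemma measurable_dotProduct {k : ℕ} (u : Fin k → ℝ) :
    Measurable fun x : Fin k → ℝ => u ⬝ᵥ x := by
  simp only [dotProduct]
  exact Finset.measurable_sum _ fun i _ => (measurable_pi_apply i).const_mul _

/-- If `x ∼ N(a, A)` and, conditionally on `x`, `y ∼ N(Hx + c, B)`
(i.e. `y = Hx + c + v` with `v ∼ N(0, B)` independent of `x`), then `(x, y)` is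
jointly Gaussian with mean `(a, Ha + c)` and covariance
`[[A, AHᵀ], [HA, HAHᵀ + B]]`. -/
theorem joint_gaussian_of_conditional_gaussian {Ω : Type*} [MeasurableSpace Ω]
    (P : Measure Ω) [IsProbabilityMeasure P]
    {n m : ℕ} (X : Ω → Fin n → ℝ) (V : Ω → Fin m → ℝ)
    (a : Fin n → ℝ) (c : Fin m → ℝ)
    (A : Matrix (Fin n) (Fin n) ℝ) (B : Matrix (Fin m) (Fin m) ℝ)
    (H : Matrix (Fin m) (Fin n) ℝ)
    (hA : A.PosSemidef) (hB : B.PosSemidef)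
    (hmX : Measurable X) (hmV : Measurable V)
    (hX : IsGaussianVec P X a A) (hV : IsGaussianVec P V 0 B)
    (hindep : IndepFun X V P) :
    IsGaussianVec P (fun ω => Sum.elim (X ω) (H *ᵥ X ω + c + V ω))
      (Sum.elim a (H *ᵥ a + c))
      (Matrix.fromBlocks A (A * Hᵀ) (H * A) (H * A * Hᵀ + B)) := by
  intro w
  set w₁ : Fin n → ℝ := w ∘ Sum.inl with hw₁
  set w₂ : Fin m → ℝ := w ∘ Sum.inr with hw₂
  set u : Fin n → ℝ := w₁ + Hᵀ *ᵥ w₂ with hu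
  -- the functional applied to the joint vector
  have hfun : (fun ω => w ⬝ᵥ Sum.elim (X ω) (H *ᵥ X ω + c + V ω))
      = fun ω => (u ⬝ᵥ X ω + w₂ ⬝ᵥ V ω) + w₂ ⬝ᵥ c := by
    funext ω
    rw [← Sum.elim_comp_inl_inr w, sumElim_dotProduct_sumElim]
    simp only [hu, Sum.elim_comp_inl_inr, dotProduct_add, add_dotProduct,
      Matrix.dotProduct_mulVec, ← Matrix.mulVec_transpose]
    ring
  -- the mean
  have hmean : w ⬝ᵥ Sum.elim a (H *ᵥ a + c) = (u ⬝ᵥ a + (0:ℝ)) + w₂ ⬝ᵥ c := by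
    rw [← Sum.elim_comp_inl_inr w, sumElim_dotProduct_sumElim]
    simp only [hu, Sum.elim_comp_inl_inr, dotProduct_add, add_dotProduct,
      Matrix.dotProduct_mulVec, ← Matrix.mulVec_transpose]
    ring
  -- the variance
  have hHt : ∀ z : Fin n → ℝ, w₂ ⬝ᵥ (H *ᵥ z) = (Hᵀ *ᵥ w₂) ⬝ᵥ z := by
    intro z
    rw [Matrix.dotProduct_mulVec, Matrix.mulVec_transpose]
  have hvar : w ⬝ᵥ (Matrix.fromBlocks A (A * Hᵀ) (H * A) (H * A * Hᵀ + B) *ᵥ w)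
      = u ⬝ᵥ (A *ᵥ u) + w₂ ⬝ᵥ (B *ᵥ w₂) := by
    nth_rewrite 1 [← Sum.elim_comp_inl_inr w]
    nth_rewrite 2 [← Sum.elim_comp_inl_inr w]
    rw [Matrix.fromBlocks_mulVec, sumElim_dotProduct_sumElim]
    simp only [hu, Sum.elim_comp_inl, Sum.elim_comp_inr, Matrix.add_mulVec,
      dotProduct_add, add_dotProduct, Matrix.mulVec_add, ← Matrix.mulVec_mulVec,
      hHt, Matrix.mul_assoc]
    simp only [← hw₁, ← hw₂, hHt]
    ring
  -- nonnegativity of the two variance pieces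
  have hApos : 0 ≤ u ⬝ᵥ (A *ᵥ u) := by
    have := hA.dotProduct_mulVec_nonneg u
    simpa using this
  have hBpos : 0 ≤ w₂ ⬝ᵥ (B *ᵥ w₂) := by
    have := hB.dotProduct_mulVec_nonneg w₂
    simpa using this
  -- the two marginal Gaussians
  have hXu : Measure.map (fun ω => u ⬝ᵥ X ω) P
      = gaussianReal (u ⬝ᵥ a) (Real.toNNReal (u ⬝ᵥ (A *ᵥ u))) := hX u
  have hVw : Measure.map (fun ω => w₂ ⬝ᵥ V ω) P
      = gaussianReal 0 (Real.toNNReal (w₂ ⬝ᵥ (B *ᵥ w₂))) := by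
    have := hV w₂
    simpa using this
  have hind : IndepFun (fun ω => u ⬝ᵥ X ω) (fun ω => w₂ ⬝ᵥ V ω) P :=
    hindep.comp (measurable_dotProduct u) (measurable_dotProduct w₂)
  have hsum : Measure.map (fun ω => u ⬝ᵥ X ω + w₂ ⬝ᵥ V ω) P
      = gaussianReal (u ⬝ᵥ a + 0)
          (Real.toNNReal (u ⬝ᵥ (A *ᵥ u)) + Real.toNNReal (w₂ ⬝ᵥ (B *ᵥ w₂))) :=
    indep_gauss_add ((measurable_dotProduct u).comp hmX)
      ((measurable_dotProduct w₂).comp hmV) hind hXu hVw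
  have hfinal : Measure.map (fun ω => (u ⬝ᵥ X ω + w₂ ⬝ᵥ V ω) + w₂ ⬝ᵥ c) P
      = gaussianReal ((u ⬝ᵥ a + 0) + w₂ ⬝ᵥ c)
          (Real.toNNReal (u ⬝ᵥ (A *ᵥ u)) + Real.toNNReal (w₂ ⬝ᵥ (B *ᵥ w₂))) := by
    have hmZ : Measurable fun ω => u ⬝ᵥ X ω + w₂ ⬝ᵥ V ω :=
      ((measurable_dotProduct u).comp hmX).add ((measurable_dotProduct w₂).comp hmV)
    rw [show (fun ω => (u ⬝ᵥ X ω + w₂ ⬝ᵥ V ω) + w₂ ⬝ᵥ c)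
        = ((· + w₂ ⬝ᵥ c) ∘ (fun ω => u ⬝ᵥ X ω + w₂ ⬝ᵥ V ω)) from rfl,
      ← Measure.map_map (measurable_add_const _) hmZ,
      hsum, gaussianReal_map_add_const]
  rw [hfun, hmean, hvar, Real.toNNReal_add hApos hBpos]
  exact hfinal
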